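/- Thomas' estimate in dimension 1: let β = 1/2, ρ > 0, and k = 2π(iρ + 1/2). Then for every m ∈ ℤ, |(2πm + k)²| ≥ 4π²ρ, i.e., the symbol of the free operator (D+k)² on the circle is invertible with inverse bounded by (4π²ρ)^{-1}. -/

import Mathlib

open Complex

theorem thomas_estimate_dim_one (ρ : ℝ) (hρ : 0 < ρ) (m : ℤ) :
    4 * Real.pi ^ 2 * ρ
      ≤ ‖((2 * Real.pi * (m : ℝ) : ℂ)
          + 2 * Real.pi * (ρ * Complex.I + 1 / 2)) ^ 2‖ := by
  set z : ℂ := (2 * Real.pi * (m : ℝ) : ℂ) + 2 * Real.pi * (ρ * Complex.I + 1 / 2) with hz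
  have him : (z ^ 2).im = 4 * Real.pi ^ 2 * ρ * (2 * m + 1) := by
    simp [hz, pow_two, Complex.add_im, Complex.mul_im, Complex.mul_re]
    ring
  have h1 : (1 : ℝ) ≤ |(2 * (m : ℝ) + 1)| := by
    have : (1 : ℤ) ≤ |2 * m + 1| := by rcases abs_cases (2 * m + 1) with ⟨h, _⟩ | ⟨h, _⟩ <;> omega
    calc (1:ℝ) ≤ ((|2 * m + 1| : ℤ) : ℝ) := by exact_mod_cast this
      _ = |(2 * (m:ℝ) + 1)| := by push_cast [Int.cast_abs]; norm_num
  have hpos : 0 < 4 * Real.pi ^ 2 * ρ :=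
    mul_pos (by positivity) hρ
  calc 4 * Real.pi ^ 2 * ρ = 4 * Real.pi ^ 2 * ρ * 1 := by ring
    _ ≤ 4 * Real.pi ^ 2 * ρ * |(2 * (m : ℝ) + 1)| := by
        exact mul_le_mul_of_nonneg_left h1 hpos.le
    _ = |(z ^ 2).im| := by rw [him, abs_mul, abs_of_pos hpos]
    _ ≤ ‖z ^ 2‖ := Complex.abs_im_le_norm _
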